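/- Let v : ℝ → ℝ and let x be a nonzero point of three-dimensional Euclidean space, with r = ‖x‖. If v is differentiable at r, then the radial vector field F(x) = v(‖x‖) • (‖x‖⁻¹ • x) satisfies the convective-term identity (fderiv ℝ F x)(F(x)) = (v(r)·v'(r)) • (‖x‖⁻¹ • x); that is, (v·∇)v = v (∂v/∂r) e_r for a purely radial field. -/

import Mathlib

lemma hasFDerivAt_norm_aux (x : EuclideanSpace ℝ (Fin 3)) (hx : x ≠ 0) :
    HasFDerivAt (fun y : EuclideanSpace ℝ (Fin 3) => ‖y‖)
      (‖x‖⁻¹ • (innerSL ℝ x)) x := by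
  have hr : ‖x‖ ≠ 0 := norm_ne_zero_iff.mpr hx
  have h2 : (‖x‖ : ℝ) ^ 2 ≠ 0 := pow_ne_zero _ hr
  have h : HasFDerivAt (fun y : EuclideanSpace ℝ (Fin 3) => Real.sqrt (‖y‖ ^ 2))
      ((1 / (2 * Real.sqrt (‖x‖ ^ 2))) • (2 • (innerSL ℝ x))) x :=
    (Real.hasDerivAt_sqrt h2).comp_hasFDerivAt x (hasStrictFDerivAt_norm_sq x).hasFDerivAt
  have heq : (fun y : EuclideanSpace ℝ (Fin 3) => Real.sqrt (‖y‖ ^ 2))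
      = fun y => ‖y‖ := by
    funext y; rw [Real.sqrt_sq (norm_nonneg y)]
  rw [heq] at h
  convert h using 1
  · rfl
  rw [Real.sqrt_sq (norm_nonneg x)]
  ext y
  simp [smul_smul]
  field_simp

/-- Convective term of a radial field: for `F x = v ‖x‖ • (‖x‖⁻¹ • x)` at a nonzero point `x`
with `r = ‖x‖`, if `v` is differentiable at `r` then
`(fderiv ℝ F x) (F x) = (v r * v' r) • (‖x‖⁻¹ • x)`, i.e. `(v·∇)v = v (∂v/∂r) e_r`. -/
theorem radial_convective_term (v : ℝ → ℝ) (x : EuclideanSpace ℝ (Fin 3)) (hx : x ≠ 0)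
    (hv : DifferentiableAt ℝ v ‖x‖) :
    (fderiv ℝ (fun y : EuclideanSpace ℝ (Fin 3) => v ‖y‖ • (‖y‖⁻¹ • y)) x)
        (v ‖x‖ • (‖x‖⁻¹ • x))
      = (v ‖x‖ * deriv v ‖x‖) • (‖x‖⁻¹ • x) := by
  have hr : ‖x‖ ≠ 0 := norm_ne_zero_iff.mpr hx
  set r : ℝ := ‖x‖ with hrdef
  have hnorm := hasFDerivAt_norm_aux x hx
  have hφ : HasDerivAt (fun t : ℝ => v t * t⁻¹)
      (deriv v r * r⁻¹ + v r * (-(r ^ 2)⁻¹)) r :=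
    hv.hasDerivAt.mul (hasDerivAt_inv hr)
  have hg : HasFDerivAt (fun y : EuclideanSpace ℝ (Fin 3) => v ‖y‖ * ‖y‖⁻¹)
      ((deriv v r * r⁻¹ + v r * (-(r ^ 2)⁻¹)) • (r⁻¹ • (innerSL ℝ x))) x :=
    hφ.comp_hasFDerivAt (h₂ := fun t : ℝ => v t * t⁻¹) x hnorm
  have hF : HasFDerivAt (fun y : EuclideanSpace ℝ (Fin 3) => (v ‖y‖ * ‖y‖⁻¹) • y)
      ((v r * r⁻¹) • (ContinuousLinearMap.id ℝ _)
        + (((deriv v r * r⁻¹ + v r * (-(r ^ 2)⁻¹)) • (r⁻¹ • (innerSL ℝ x))).smulRight x)) x :=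
    hg.smul (hasFDerivAt_id x)
  have hfun : (fun y : EuclideanSpace ℝ (Fin 3) => v ‖y‖ • (‖y‖⁻¹ • y))
      = fun y : EuclideanSpace ℝ (Fin 3) => (v ‖y‖ * ‖y‖⁻¹) • y := by
    funext y; rw [smul_smul]
  rw [hfun, hF.fderiv]
  have hinner : (innerSL ℝ x) (v r • (r⁻¹ • x)) = v r * r⁻¹ * r ^ 2 := by
    simp only [innerSL_apply_apply, real_inner_smul_right, real_inner_self_eq_norm_sq]
    ring
  simp only [ContinuousLinearMap.add_apply, ContinuousLinearMap.smul_apply,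
    ContinuousLinearMap.id_apply, ContinuousLinearMap.smulRight_apply, hinner]
  rw [smul_smul, smul_smul, smul_smul, smul_smul, ← add_smul]
  congr 1
  rw [smul_eq_mul]
  field_simp
  ring
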